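/- Let F be a field, f(t) = t^n + c_{n-1}t^{n-1} + ... + c_0 a monic polynomial over F, and d_1,...,d_n elements of F with d_1 + ... + d_n = -c_{n-1}. Then the sequence b_1,...,b_{n-1} in F such that f(t) is the characteristic polynomial of the matrix A (with diagonal d_i, subdiagonal 1's, last column b_1,...,b_{n-1},d_n, zeros elsewhere) is unique: if two choices of (b_1,...,b_{n-1}) yield matrices with characteristic polynomial f, they are equal. -/
import Mathlib

open Polynomial

/-- The matrix with diagonal `d`, subdiagonal entries `1`, last column
entries `b` above the diagonal, and zeros elsewhere. -/
def matA {F : Type*} [Field F] (n : ℕ) (d : Fin n → F) (b : Fin (n - 1) → F) :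
    Matrix (Fin n) (Fin n) F :=
  Matrix.of fun i j =>
    if i = j then d i
    else if (i : ℕ) = (j : ℕ) + 1 then 1
    else if (j : ℕ) = n - 1 then (if h : (i : ℕ) < n - 1 then b ⟨i, h⟩ else 0)
    else 0

namespace MatAAux

open Matrix

variable {F : Type*} [Field F]

lemma matA_submatrix_succ (n : ℕ) (d : Fin (n+2) → F) (b : Fin (n+1) → F) :
    (matA (n+2) d b).submatrix Fin.succ Fin.succ
      = matA (n+1) (fun i => d i.succ) (fun i : Fin n => b i.succ) := by
  ext i j
  have e1 : (n+2)-1 = n+1 := rfl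
  have e2 : (n+1)-1 = n := rfl
  simp only [matA, submatrix_apply, of_apply, Fin.val_succ, Fin.succ_inj, e1, e2]
  by_cases hij : i = j
  · simp [hij]
  · simp only [hij, if_false]
    have h1 : ((i:ℕ)+1 = (j:ℕ)+1+1) ↔ ((i:ℕ) = (j:ℕ)+1) := by omega
    rw [if_congr h1 rfl rfl]
    by_cases h2 : (i:ℕ) = (j:ℕ)+1
    · simp [h2]
    · simp only [h2, if_false]
      have h3 : ((j:ℕ)+1 = n+1) ↔ ((j:ℕ) = n) := by omega
      rw [if_congr h3 rfl rfl]
      by_cases h4 : (j:ℕ) = n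
      · simp only [h4, if_true]
        have h5 : ((i:ℕ)+1 < n+1) ↔ ((i:ℕ) < n) := by omega
        by_cases h6 : (i:ℕ) < n
        · rw [dif_pos (h5.mpr h6), dif_pos h6]
          congr 1
        · rw [dif_neg (fun h => h6 (h5.mp h)), dif_neg h6]
      · simp [h4]

lemma charmatrix_submatrix_succ (n : ℕ) (M : Matrix (Fin (n+1)) (Fin (n+1)) F) :
    (charmatrix M).submatrix Fin.succ Fin.succ = charmatrix (M.submatrix Fin.succ Fin.succ) := by
  ext i j
  by_cases h : i = j
  · subst h; simp [charmatrix_apply_eq]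
  · rw [submatrix_apply, charmatrix_apply_ne _ _ _ (fun hc => h (Fin.succ_inj.mp hc)),
      charmatrix_apply_ne _ _ _ h, submatrix_apply]

lemma det_minor_last (n : ℕ) (d : Fin (n+2) → F) (b : Fin (n+1) → F) :
    ((charmatrix (matA (n+2) d b)).submatrix Fin.succ (Fin.last (n+1)).succAbove).det
      = (-1 : F[X])^(n+1) := by
  rw [Fin.succAbove_last]
  have hdiag : ∀ k : Fin (n+1),
      ((charmatrix (matA (n+2) d b)).submatrix Fin.succ Fin.castSucc) k k = -1 := by
    intro k
    rw [submatrix_apply, charmatrix_apply_ne _ _ _ (by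
      intro hc
      have := congrArg Fin.val hc
      simp at this)]
    have : matA (n+2) d b k.succ k.castSucc = 1 := by
      simp only [matA, of_apply]
      rw [if_neg (by intro hc; have := congrArg Fin.val hc; simp at this),
        if_pos (by simp)]
    rw [this]
    simp
  rw [det_of_upperTriangular]
  · simp only [hdiag, Finset.prod_const, Finset.card_univ, Fintype.card_fin]
  · intro i j hij
    have hij' : (j:ℕ) < (i:ℕ) := hij
    rw [submatrix_apply, charmatrix_apply_ne _ _ _ (by
      intro hc; have := congrArg Fin.val hc; simp at this; omega)]
    have : matA (n+2) d b i.succ j.castSucc = 0 := by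
      simp only [matA, of_apply]
      rw [if_neg (by intro hc; have := congrArg Fin.val hc; simp at this; omega),
        if_neg (by simp; omega), if_neg (by simp; omega)]
    rw [this, map_zero, neg_zero]

lemma charpoly_rec (n : ℕ) (d : Fin (n+2) → F) (b : Fin (n+1) → F) :
    (matA (n+2) d b).charpoly
      = (X - C (d 0)) * (matA (n+1) (fun i => d i.succ) (fun i : Fin n => b i.succ)).charpoly
        - C (b 0) := by
  rw [Matrix.charpoly, det_succ_row_zero, Fin.sum_univ_succ, Fin.sum_univ_castSucc]
  have hzero : ∀ j : Fin n,
      (charmatrix (matA (n+2) d b)) 0 (j.castSucc.succ) = 0 := by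
    intro j
    rw [charmatrix_apply_ne _ _ _ (by
      intro hc; have := congrArg Fin.val hc; simp at this)]
    have : matA (n+2) d b 0 j.castSucc.succ = 0 := by
      simp only [matA, of_apply]
      rw [if_neg (by intro hc; have := congrArg Fin.val hc; simp at this),
        if_neg (by simp), if_neg (by simp; omega)]
    rw [this, map_zero, neg_zero]
  have h00 : (charmatrix (matA (n+2) d b)) 0 0 = X - C (d 0) := by
    rw [charmatrix_apply_eq]
    congr 1
  have hlast : (charmatrix (matA (n+2) d b)) 0 (Fin.last (n+1)) = - C (b 0) := by
    rw [charmatrix_apply_ne _ _ _ (by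
      intro hc; have := congrArg Fin.val hc; simp at this)]
    congr 1
    simp only [matA, of_apply]
    rw [if_neg (by intro hc; have := congrArg Fin.val hc; simp at this),
      if_neg (by simp), if_pos (by simp)]
    rw [dif_pos (by simp)]
    congr 1
  have hsub : (charmatrix (matA (n+2) d b)).submatrix Fin.succ ((0 : Fin (n+2)).succAbove)
      = charmatrix (matA (n+1) (fun i => d i.succ) (fun i : Fin n => b i.succ)) := by
    rw [Fin.succAbove_zero, charmatrix_submatrix_succ, matA_submatrix_succ]
  simp only [hzero, mul_zero, zero_mul, Finset.sum_const_zero, zero_add, add_zero,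
    Fin.succ_last, Nat.succ_eq_add_one, h00, Fin.val_zero, pow_zero, one_mul, Fin.val_last]
  rw [hlast, hsub, det_minor_last, ← Matrix.charpoly]
  have hcan : ((-1 : F[X])^(n+1)) * (-C (b 0)) * ((-1)^(n+1)) = - C (b 0) := by
    have h2 : ((-1 : F[X])^(n+1)) * ((-1)^(n+1)) = 1 := by
      rw [← pow_add]
      exact Even.neg_one_pow ⟨n+1, rfl⟩
    calc ((-1 : F[X])^(n+1)) * (-C (b 0)) * ((-1)^(n+1))
        = ((-1 : F[X])^(n+1)) * ((-1)^(n+1)) * (-C (b 0)) := by ring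
      _ = - C (b 0) := by rw [h2, one_mul]
  rw [hcan]
  ring

lemma key : ∀ (n : ℕ) (d : Fin (n+1) → F) (b b' : Fin n → F),
    (matA (n+1) d b).charpoly = (matA (n+1) d b').charpoly → b = b' := by
  intro n
  induction n with
  | zero => intro d b b' _; funext i; exact i.elim0
  | succ n ih =>
    intro d b b' h
    rw [charpoly_rec, charpoly_rec] at h
    set P := (matA (n+1) (fun i => d i.succ) (fun i : Fin n => b i.succ)).charpoly with hP
    set P' := (matA (n+1) (fun i => d i.succ) (fun i : Fin n => b' i.succ)).charpoly with hP'
    have h2 : (X - C (d 0)) * (P - P') = C (b 0 - b' 0) := by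
      rw [C_sub]; ring_nf; ring_nf at h; linear_combination h
    have hq : P - P' = 0 := by
      by_contra hne
      have h1 : ((X - C (d 0)) * (P - P')).natDegree = 0 := by
        rw [h2]; exact natDegree_C _
      rw [natDegree_mul (X_sub_C_ne_zero (d 0)) hne, natDegree_X_sub_C] at h1
      omega
    have hb0 : b 0 = b' 0 := by
      rw [hq, mul_zero] at h2
      have h3 := (C_eq_zero (a := b 0 - b' 0)).mp h2.symm
      exact sub_eq_zero.mp h3
    have htail : (fun i : Fin n => b i.succ) = (fun i : Fin n => b' i.succ) :=
      ih _ _ _ (by rw [← hP, ← hP', sub_eq_zero.mp hq])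
    funext i
    refine Fin.cases hb0 (fun j => ?_) i
    exact congrFun htail j

end MatAAux

theorem stmt1 {F : Type*} [Field F] (n : ℕ) (hn : 1 ≤ n)
    (c : Fin n → F) (d : Fin n → F)
    (hd : ∑ i, d i = -c ⟨n - 1, by omega⟩)
    (b b' : Fin (n - 1) → F)
    (hb : (matA n d b).charpoly = X ^ n + ∑ i : Fin n, C (c i) * X ^ (i : ℕ))
    (hb' : (matA n d b').charpoly = X ^ n + ∑ i : Fin n, C (c i) * X ^ (i : ℕ)) :
    b = b' := by
  obtain ⟨m, rfl⟩ : ∃ m, n = m + 1 := ⟨n - 1, by omega⟩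
  exact MatAAux.key m d b b' (hb.trans hb'.symm)
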